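/- arXiv:1209.3275 — 3 statements merged into one kernel-verified Lean document; each statement's English description precedes it below -/
import Mathlib

section
/- The multiple-control Toffoli gates on n lines generate the full symmetric group on {0,1}^n. -/
/-- The action of a multiple-control Toffoli gate with target line `t` and
polarity pattern `p` on the control lines: flip the target bit iff every
other line matches the pattern. -/
def mcToffoliFun (n : ℕ) (t : Fin n) (p : Fin n → Bool) (x : Fin n → Bool) :
    Fin n → Bool :=
  if ∀ j, j ≠ t → x j = p j then Function.update x t (!(x t)) else x

theorem mcToffoliFun_involutive (n : ℕ) (t : Fin n) (p : Fin n → Bool) :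
    Function.Involutive (mcToffoliFun n t p) := by
  intro x
  unfold mcToffoliFun
  by_cases h : ∀ j, j ≠ t → x j = p j
  · have h2 : ∀ j, j ≠ t → Function.update x t (!(x t)) j = p j := by
      intro j hj
      rw [Function.update_of_ne hj]
      exact h j hj
  
    simp [if_pos h, if_pos h2, Function.update_idem]
  · simp [if_neg h]

/-- A multiple-control Toffoli gate as a permutation of `{0,1}ⁿ`. -/
def mcToffoliPerm (n : ℕ) (t : Fin n) (p : Fin n → Bool) :
    Equiv.Perm (Fin n → Bool) :=
  (mcToffoliFun_involutive n t p).toPerm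

/-- The set of all multiple-control Toffoli gates on `n` lines. -/
def mcToffoliSet (n : ℕ) : Set (Equiv.Perm (Fin n → Bool)) :=
  {σ | ∃ t p, σ = mcToffoliPerm n t p}

/-- aux -/
lemma swap_adjacent_eq (n : ℕ) (t : Fin n) (x y : Fin n → Bool)
    (hxy : x t ≠ y t) (h : ∀ j, j ≠ t → x j = y j) :
    Equiv.swap x y = mcToffoliPerm n t x := by
  have hyt : y t = !(x t) := by
    cases hx : x t <;> cases hy : y t <;> simp_all
  have hyx : y = Function.update x t (!(x t)) := by
    funext j
    rcases eq_or_ne j t with rfl | hj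
    · simp [Function.update_self, hyt]
    · simp [Function.update_of_ne hj, (h j hj).symm]
  have hxy' : x ≠ y := fun hh => hxy (by rw [hh])
  refine Equiv.ext fun z => ?_
  show Equiv.swap x y z = mcToffoliFun n t x z
  unfold mcToffoliFun
  by_cases hc : ∀ j, j ≠ t → z j = x j
  · rw [if_pos hc]
    rcases eq_or_ne z x with rfl | hzx
    · rw [Equiv.swap_apply_left, hyx]
    · have hz : z = y := by
        funext j
        rcases eq_or_ne j t with rfl | hj
        · by_contra hne
          apply hzx
          funext i
          rcases eq_or_ne i j with rfl | hi
          · cases hz : z i <;> cases hx : x i <;> cases hy : y i <;> simp_all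
          · exact hc i hi
        · rw [hc j hj, h j hj]
      subst hz
      rw [Equiv.swap_apply_right]
      funext j
      rcases eq_or_ne j t with rfl | hj
      · simp [Function.update_self, hyt]
      · rw [Function.update_of_ne hj, (h j hj)]
  · rw [if_neg hc]
    push_neg at hc
    obtain ⟨j, hj, hzj⟩ := hc
    apply Equiv.swap_apply_of_ne_of_ne
    · intro hh; exact hzj (by rw [hh])
    · intro hh; apply hzj; rw [hh]; exact (h j hj).symm

lemma swap_mem (n : ℕ) : ∀ d (x y : Fin n → Bool),
    (Finset.univ.filter (fun j => x j ≠ y j)).card = d →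
    Equiv.swap x y ∈ Subgroup.closure (mcToffoliSet n) := by
  intro d
  induction d using Nat.strong_induction_on with
  | _ d ih =>
    intro x y hd
    rcases Nat.lt_or_ge d 2 with hd2 | hd2
    · interval_cases d
      · -- x = y
        have : x = y := by
          funext j
          by_contra hj
          have : j ∈ Finset.univ.filter (fun j => x j ≠ y j) := by simp [hj]
          rw [Finset.card_eq_zero.mp hd] at this
          exact absurd this (Finset.notMem_empty j)
        rw [this, Equiv.swap_self]
        exact Subgroup.one_mem _
      · -- exactly one differing coord
        obtain ⟨t, ht⟩ := Finset.card_eq_one.mp hd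
        have htm : t ∈ Finset.univ.filter (fun j => x j ≠ y j) := by simp [ht]
        have hxt : x t ≠ y t := by simpa using htm
        have hoth : ∀ j, j ≠ t → x j = y j := by
          intro j hj
          by_contra hne
          have : j ∈ Finset.univ.filter (fun j => x j ≠ y j) := by simp [hne]
          rw [ht] at this
          exact hj (Finset.mem_singleton.mp this)
        rw [swap_adjacent_eq n t x y hxt hoth]
        exact Subgroup.subset_closure ⟨t, x, rfl⟩
    · -- d ≥ 2
      have hne : (Finset.univ.filter (fun j => x j ≠ y j)).Nonempty := by
        rw [← Finset.card_pos, hd]; omega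
      obtain ⟨t, ht⟩ := hne
      have hxt : x t ≠ y t := by simpa using ht
      set z := Function.update x t (y t) with hz
      have hzx : ∀ j, j ≠ t → z j = x j := fun j hj => Function.update_of_ne hj _ _
      have hzt : z t = y t := Function.update_self _ _ _
      have d1 : (Finset.univ.filter (fun j => x j ≠ z j)).card = 1 := by
        rw [Finset.card_eq_one]
        refine ⟨t, ?_⟩
        ext j
        simp only [Finset.mem_filter, Finset.mem_univ, true_and, Finset.mem_singleton]
        constructor
        · intro hj
          by_contra hjt
          exact hj ((hzx j hjt).symm)
        · rintro rfl
          rw [hzt]; exact hxt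
      have d2 : (Finset.univ.filter (fun j => z j ≠ y j)).card = d - 1 := by
        have : (Finset.univ.filter (fun j => z j ≠ y j)) =
            (Finset.univ.filter (fun j => x j ≠ y j)).erase t := by
          ext j
          simp only [Finset.mem_filter, Finset.mem_univ, true_and, Finset.mem_erase]
          rcases eq_or_ne j t with rfl | hj
          · simp [hzt]
          · simp [hzx j hj, hj]
        rw [this, Finset.card_erase_of_mem ht, hd]
      have hzney : z ≠ y := by
        intro hh
        have : (Finset.univ.filter (fun j => z j ≠ y j)).card = 0 := by
          simp [hh]
        omega
      have hznex : z ≠ x := by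
        intro hh
        have : (Finset.univ.filter (fun j => x j ≠ z j)).card = 0 := by
          simp [hh]
        omega
      have hxney : x ≠ y := fun hh => hxt (by rw [hh])
      have m1 : Equiv.swap x z ∈ Subgroup.closure (mcToffoliSet n) :=
        ih 1 (by omega) x z d1
      have m2 : Equiv.swap z y ∈ Subgroup.closure (mcToffoliSet n) :=
        ih (d-1) (by omega) z y d2
      have key := Equiv.swap_mul_swap_mul_swap (x := y) (y := z) (z := x)
        hzney.symm hxney.symm
      rw [← key, Equiv.swap_comm z x, Equiv.swap_comm y z]
      exact Subgroup.mul_mem _ (Subgroup.mul_mem _ m1 m2) m1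

/-- The multiple-control Toffoli gates on `n` lines generate the full symmetric
group on `{0,1}ⁿ`. -/
theorem mcToffoli_generates (n : ℕ) :
    Subgroup.closure (mcToffoliSet n) = (⊤ : Subgroup (Equiv.Perm (Fin n → Bool))) := by
  rw [eq_top_iff, ← Equiv.Perm.closure_isSwap]
  apply Subgroup.closure_le _ |>.mpr
  rintro σ ⟨x, y, hxy, rfl⟩
  exact swap_mem n _ x y rfl
end

section
/- The reverse permutation ρ on {0,1}^n, defined by bitwise complement ρ(x) = x̄ (equivalently ρ(i) = 2^n − 1 − i), satisfies ∑_{x∈{0,1}^n} d_H(ρ(x), x) = n·2^n; consequently any factorization of ρ into MC-Toffoli transpositions requires at least n·2^(n-1) gates. -/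
/-- The reverse (bitwise complement) permutation of `{0,1}ⁿ`. -/
def revPerm (n : ℕ) : Equiv.Perm (Fin n → Bool) :=
  Function.Involutive.toPerm (fun x i => !(x i)) (by intro x; funext i; simp)

lemma gate_disp (n : ℕ) (t : Fin n) (p : Fin n → Bool) :
    ∑ y : Fin n → Bool, hammingDist (mcToffoliPerm n t p y) y ≤ 2 := by
  have hval : ∀ y, hammingDist (mcToffoliPerm n t p y) y
      = if ∀ j, j ≠ t → y j = p j then 1 else 0 := by
    intro y
    show hammingDist (mcToffoliFun n t p y) y = _
    unfold mcToffoliFun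
    by_cases h : ∀ j, j ≠ t → y j = p j
    · rw [if_pos h, if_pos h]
      rw [hammingDist]
      rw [Finset.card_eq_one]
      refine ⟨t, ?_⟩
      ext j
      simp only [Finset.mem_filter, Finset.mem_univ, true_and, Finset.mem_singleton]
      constructor
      · intro hj
        by_contra hjt
        exact hj (Function.update_of_ne hjt _ _)
      · rintro rfl
        simp
    · rw [if_neg h, if_neg h, hammingDist_self]
  calc ∑ y : Fin n → Bool, hammingDist (mcToffoliPerm n t p y) y
      = (Finset.univ.filter (fun y : Fin n → Bool => ∀ j, j ≠ t → y j = p j)).card := by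
        simp only [hval]
        rw [Finset.sum_boole]
        simp
    _ ≤ Fintype.card Bool := by
        apply Finset.card_le_card_of_injOn (fun y => y t)
        · intro y _; exact Finset.mem_univ _
        · intro a ha b hb hab
          simp only [Finset.mem_coe, Finset.mem_filter] at ha hb
          funext j
          by_cases hj : j = t
          · subst hj; exact hab
          · rw [ha.2 j hj, hb.2 j hj]
    _ = 2 := by simp

lemma disp_le (n : ℕ) (l : List (Equiv.Perm (Fin n → Bool)))
    (hl : ∀ σ ∈ l, σ ∈ mcToffoliSet n) :
    ∑ x : Fin n → Bool, hammingDist (l.prod x) x ≤ 2 * l.length := by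
  induction l with
  | nil => simp
  | cons σ l ih =>
    have hσ := hl σ (by simp)
    obtain ⟨t, p, rfl⟩ := hσ
    have ih' := ih (fun τ hτ => hl τ (by simp [hτ]))
    calc ∑ x : Fin n → Bool, hammingDist (((mcToffoliPerm n t p :: l).prod) x) x
        = ∑ x : Fin n → Bool, hammingDist (mcToffoliPerm n t p (l.prod x)) x := by
          simp [List.prod_cons, Equiv.Perm.mul_apply]
      _ ≤ ∑ x : Fin n → Bool, (hammingDist (mcToffoliPerm n t p (l.prod x)) (l.prod x)
            + hammingDist (l.prod x) x) := by
          apply Finset.sum_le_sum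
          intro x _
          exact hammingDist_triangle _ _ _
      _ = (∑ x : Fin n → Bool, hammingDist (mcToffoliPerm n t p (l.prod x)) (l.prod x))
            + ∑ x : Fin n → Bool, hammingDist (l.prod x) x := Finset.sum_add_distrib
      _ = (∑ y : Fin n → Bool, hammingDist (mcToffoliPerm n t p y) y)
            + ∑ x : Fin n → Bool, hammingDist (l.prod x) x := by
          rw [Equiv.sum_comp (l.prod) (fun y => hammingDist (mcToffoliPerm n t p y) y)]
      _ ≤ 2 + 2 * l.length := Nat.add_le_add (gate_disp n t p) ih'
      _ = 2 * (mcToffoliPerm n t p :: l).length := by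
          simp [List.length_cons]; ring

/-- The reverse permutation has total Hamming displacement `n * 2 ^ n`, hence
any factorization of it into MC-Toffoli gates uses at least `n * 2 ^ (n - 1)`
gates. -/
theorem revPerm_displacement_and_lower_bound (n : ℕ) :
    (∑ x : Fin n → Bool, hammingDist (revPerm n x) x = n * 2 ^ n) ∧
    (∀ l : List (Equiv.Perm (Fin n → Bool)), (∀ σ ∈ l, σ ∈ mcToffoliSet n) →
      l.prod = revPerm n → n * 2 ^ (n - 1) ≤ l.length) := by
  have hdisp : ∑ x : Fin n → Bool, hammingDist (revPerm n x) x = n * 2 ^ n := by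
    have h1 : ∀ x : Fin n → Bool, hammingDist (revPerm n x) x = n := by
      intro x
      show hammingDist (fun i => !(x i)) x = n
      rw [hammingDist]
      rw [Finset.filter_true_of_mem (fun i _ => by simp)]
      simp
    simp [h1, Finset.sum_const, mul_comm]
  refine ⟨hdisp, ?_⟩
  intro l hl hprod
  rcases Nat.eq_zero_or_pos n with rfl | hn
  · simp
  · have := disp_le n l hl
    rw [hprod, hdisp] at this
    obtain ⟨m, rfl⟩ := Nat.exists_eq_succ_of_ne_zero hn.ne'
    have h2 : (m + 1) * 2 ^ (m + 1) = 2 * ((m + 1) * 2 ^ (m + 1 - 1)) := by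
      simp [pow_succ]; ring
    simp only [Nat.succ_eq_add_one, Nat.add_sub_cancel] at this h2 ⊢
    omega
end

section
/- The diameter of the Cayley graph H_n of Sym({0,1}^n) with MC-Toffoli generating set is at least n·2^(n-1). -/
/-- The (undirected) Cayley graph of a group `G` with connecting set `C`:
two distinct elements are adjacent iff one is obtained from the other by left
multiplication by a generator. -/
def cayleyGraph {G : Type*} [Group G] (C : Set G) : SimpleGraph G where
  Adj g h := g ≠ h ∧ ∃ c ∈ C, h = c * g ∨ g = c * h
  symm := by
    constructor
    rintro g h ⟨hne, c, hc, hch⟩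
    exact ⟨hne.symm, c, hc, hch.symm⟩
  loopless := by
    constructor
    rintro g ⟨hne, -⟩
    exact hne rfl

open Finset

/-- Total Hamming displacement of a permutation. -/
def Phi (n : ℕ) (σ : Equiv.Perm (Fin n → Bool)) : ℕ :=
  ∑ x : Fin n → Bool, hammingDist (σ x) x

lemma Phi_one (n : ℕ) : Phi n 1 = 0 := by
  simp [Phi, hammingDist_self]

lemma ham_update_le (n : ℕ) (y : Fin n → Bool) (t : Fin n) (b : Bool) :
    hammingDist (Function.update y t b) y ≤ 1 := by
  unfold hammingDist
  apply Finset.card_le_one.mpr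
  intro i hi j hj
  simp only [mem_filter, mem_univ, true_and] at hi hj
  have hi' : i = t := by
    by_contra h
    exact hi (Function.update_of_ne h _ _)
  have hj' : j = t := by
    by_contra h
    exact hj (Function.update_of_ne h _ _)
  rw [hi', hj']

lemma sum_ham_mcToffoli_le (n : ℕ) (t : Fin n) (p : Fin n → Bool) :
    ∑ y : Fin n → Bool, hammingDist (mcToffoliFun n t p y) y ≤ 2 := by
  have h1 : ∀ y : Fin n → Bool, hammingDist (mcToffoliFun n t p y) y ≤
      if (∀ j, j ≠ t → y j = p j) then 1 else 0 := by
    intro y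
    unfold mcToffoliFun
    split
    · exact ham_update_le n y t _
    · simp [hammingDist_self]
  calc ∑ y : Fin n → Bool, hammingDist (mcToffoliFun n t p y) y
      ≤ ∑ y : Fin n → Bool, if (∀ j, j ≠ t → y j = p j) then 1 else 0 :=
        Finset.sum_le_sum fun y _ => h1 y
    _ = (Finset.univ.filter fun y : Fin n → Bool => ∀ j, j ≠ t → y j = p j).card :=
        (Finset.card_filter _ _).symm
    _ ≤ Fintype.card Bool := by
        apply Finset.card_le_card_of_injOn (fun y => y t) (fun _ _ => Finset.mem_univ _)
        intro y1 h1' y2 h2' hy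
        simp only [coe_filter, Set.mem_setOf_eq, mem_univ, true_and] at h1' h2'
        funext j
        by_cases hj : j = t
        · rw [hj]; exact hy
        · rw [h1' j hj, h2' j hj]
    _ = 2 := Fintype.card_bool

lemma Phi_mul_le (n : ℕ) (t : Fin n) (p : Fin n → Bool) (g : Equiv.Perm (Fin n → Bool)) :
    Phi n (mcToffoliPerm n t p * g) ≤ Phi n g + 2 := by
  have happly : ∀ x, (mcToffoliPerm n t p * g) x = mcToffoliFun n t p (g x) := fun x => rfl
  calc Phi n (mcToffoliPerm n t p * g)
      ≤ ∑ x : Fin n → Bool, (hammingDist (mcToffoliFun n t p (g x)) (g x)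
          + hammingDist (g x) x) := by
        apply Finset.sum_le_sum
        intro x _
        rw [happly]
        exact hammingDist_triangle _ _ _
    _ = (∑ x : Fin n → Bool, hammingDist (mcToffoliFun n t p (g x)) (g x)) + Phi n g := by
        rw [Finset.sum_add_distrib]; rfl
    _ = (∑ y : Fin n → Bool, hammingDist (mcToffoliFun n t p y) y) + Phi n g := by
        rw [Equiv.sum_comp g (fun y => hammingDist (mcToffoliFun n t p y) y)]
    _ ≤ 2 + Phi n g := by
        exact Nat.add_le_add_right (sum_ham_mcToffoli_le n t p) _
    _ = Phi n g + 2 := Nat.add_comm _ _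

lemma Phi_le_of_adj {n : ℕ} {a b : Equiv.Perm (Fin n → Bool)}
    (h : (cayleyGraph (mcToffoliSet n)).Adj a b) : Phi n a ≤ Phi n b + 2 := by
  obtain ⟨-, c, ⟨t, p, rfl⟩, hc⟩ := h
  have hinv : mcToffoliPerm n t p * mcToffoliPerm n t p = 1 := by
    exact Equiv.ext (mcToffoliFun_involutive n t p)
  rcases hc with hb | ha
  · have : a = mcToffoliPerm n t p * b := by
      rw [hb, ← mul_assoc, hinv, one_mul]
    rw [this]
    exact Phi_mul_le n t p b
  · rw [ha]
    exact Phi_mul_le n t p b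

lemma Phi_le_aux {n : ℕ} {a b : Equiv.Perm (Fin n → Bool)}
    (w : (cayleyGraph (mcToffoliSet n)).Walk a b) :
    Phi n a ≤ Phi n b + 2 * w.length := by
  induction w with
  | nil => simp
  | cons h w ih =>
    rename_i u v x
    calc Phi n u ≤ Phi n v + 2 := Phi_le_of_adj h
      _ ≤ (Phi n x + 2 * w.length) + 2 := Nat.add_le_add_right ih _
      _ = Phi n x + 2 * (w.length + 1) := by ring
      _ = Phi n x + 2 * (SimpleGraph.Walk.cons h w).length := by
          rw [SimpleGraph.Walk.length_cons]

lemma Phi_le_two_mul_length {n : ℕ} {a : Equiv.Perm (Fin n → Bool)}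
    (w : (cayleyGraph (mcToffoliSet n)).Walk a 1) :
    Phi n a ≤ 2 * w.length := by
  have := Phi_le_aux w
  rwa [Phi_one, Nat.zero_add] at this

/-- The bitwise complement as a permutation. -/
def complPerm (n : ℕ) : Equiv.Perm (Fin n → Bool) :=
  Function.Involutive.toPerm (fun x i => !(x i)) (fun x => by funext i; simp)

lemma Phi_complPerm (n : ℕ) : Phi n (complPerm n) = 2 ^ n * n := by
  have h : ∀ x : Fin n → Bool, hammingDist (complPerm n x) x = n := by
    intro x
    unfold hammingDist
    have : (Finset.univ.filter fun i : Fin n => complPerm n x i ≠ x i) = Finset.univ := by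
      apply Finset.filter_true_of_mem
      intro i _
      show ¬(!(x i)) = x i
      cases x i <;> simp
    rw [this, Finset.card_univ, Fintype.card_fin]
  simp only [Phi, h, Finset.sum_const, Finset.card_univ, smul_eq_mul]
  congr 1
  simp [Fintype.card_fun]

lemma bool_ne_iff {a b : Bool} (h : a ≠ b) : b = !a := by
  cases a <;> cases b <;> simp_all

lemma mcToffoli_eq_swap {n : ℕ} {a b : Fin n → Bool} {t : Fin n}
    (ht : a t ≠ b t) (hoff : ∀ j, j ≠ t → a j = b j) :
    mcToffoliPerm n t a = Equiv.swap a b := by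
  have hab : a ≠ b := fun h => ht (by rw [h])
  have hbt : b t = !(a t) := bool_ne_iff ht
  have hba : b = Function.update a t (!(a t)) := by
    funext j
    by_cases hj : j = t
    · subst hj; rw [Function.update_self, hbt]
    · rw [Function.update_of_ne hj, ← hoff j hj]
  apply Equiv.ext
  intro x
  show mcToffoliFun n t a x = Equiv.swap a b x
  by_cases hcond : ∀ j, j ≠ t → x j = a j
  · unfold mcToffoliFun
    rw [if_pos hcond]
    by_cases hxt : x t = a t
    · have hxa : x = a := by
        funext j
        by_cases hj : j = t
        · subst hj; exact hxt
        · exact hcond j hj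
      subst hxa
      rw [Equiv.swap_apply_left, hba]
    · have hxb : x = b := by
        funext j
        by_cases hj : j = t
        · subst hj; rw [hbt]; exact bool_ne_iff (Ne.symm hxt)
        · rw [hcond j hj, hoff j hj]
      subst hxb
      rw [Equiv.swap_apply_right]
      funext j
      by_cases hj : j = t
      · subst hj; rw [Function.update_self, hbt, Bool.not_not]
      · rw [Function.update_of_ne hj, ← hoff j hj]
  · push_neg at hcond
    obtain ⟨j, hj, hxj⟩ := hcond
    have hxa : x ≠ a := fun h => hxj (by rw [h])
    have hxb : x ≠ b := fun h => hxj (by rw [h, ← hoff j hj])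
    rw [Equiv.swap_apply_of_ne_of_ne hxa hxb]
    unfold mcToffoliFun
    rw [if_neg]
    push_neg
    exact ⟨j, hj, hxj⟩

lemma swap_mem_closure (n : ℕ) :
    ∀ d (a b : Fin n → Bool), a ≠ b → hammingDist a b = d →
      Equiv.swap a b ∈ Subgroup.closure (mcToffoliSet n) := by
  intro d
  induction d using Nat.strong_induction_on with
  | _ d ih =>
    intro a b hab hd
    have hdpos : 1 ≤ d := by
      rcases Nat.eq_zero_or_pos d with h0 | h1
      · exact absurd (eq_of_hammingDist_eq_zero (hd.trans h0)) hab
      · exact h1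
    by_cases hd1 : d = 1
    · -- distance 1: a generator
      subst hd1
      obtain ⟨t, hset⟩ := Finset.card_eq_one.mp hd
      have hts : t ∈ ({i : Fin n | a i ≠ b i} : Finset (Fin n)) := by
        rw [hset]; exact Finset.mem_singleton_self t
      simp only [Finset.mem_filter, Finset.mem_univ, true_and] at hts
      have hoff : ∀ j, j ≠ t → a j = b j := by
        intro j hj
        by_contra hne
        have : j ∈ ({i : Fin n | a i ≠ b i} : Finset (Fin n)) := by
          simp only [Finset.mem_filter, Finset.mem_univ, true_and]; exact hne
        rw [hset, Finset.mem_singleton] at this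
        exact hj this
      rw [← mcToffoli_eq_swap hts hoff]
      exact Subgroup.subset_closure ⟨t, a, rfl⟩
    · -- distance ≥ 2: split off one step
      have hd2 : 2 ≤ d := by omega
      have hd' : ({i : Fin n | a i ≠ b i} : Finset (Fin n)).card = d := hd
      have hfil : ({i : Fin n | a i ≠ b i} : Finset (Fin n)).Nonempty := by
        rw [← Finset.card_pos, hd']; omega
      obtain ⟨i, hi⟩ := hfil
      simp only [Finset.mem_filter, Finset.mem_univ, true_and] at hi
      set c : Fin n → Bool := Function.update b i (a i) with hc
      have hci : c i = a i := Function.update_self _ _ _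
      have hcj : ∀ j, j ≠ i → c j = b j := fun j hj => Function.update_of_ne hj _ _
      have hcb : c ≠ b := fun h => hi (by rw [← hci, h])
      have hfcb : ({j : Fin n | c j ≠ b j} : Finset (Fin n)) = {i} := by
        ext j
        simp only [Finset.mem_filter, Finset.mem_univ, true_and, Finset.mem_singleton]
        constructor
        · intro h
          by_contra hj
          exact h (hcj j hj)
        · intro h; subst h; rw [hci]; exact hi
      have hdcb : hammingDist c b = 1 := by
        unfold hammingDist; rw [hfcb]; exact Finset.card_singleton i
      have hfac : ({j : Fin n | a j ≠ c j} : Finset (Fin n))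
          = ({j : Fin n | a j ≠ b j} : Finset (Fin n)).erase i := by
        ext j
        simp only [Finset.mem_filter, Finset.mem_univ, true_and, Finset.mem_erase]
        constructor
        · intro h
          have hji : j ≠ i := fun he => h (by rw [he, hci])
          exact ⟨hji, fun he => h (by rw [hcj j hji]; exact he)⟩
        · rintro ⟨hji, h⟩
          rw [hcj j hji]; exact h
      have hdac : hammingDist a c = d - 1 := by
        unfold hammingDist
        rw [hfac, Finset.card_erase_of_mem]
        · rw [hd']
        · simp only [Finset.mem_filter, Finset.mem_univ, true_and]; exact hi
      have hca : c ≠ a := by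
        intro h
        have : hammingDist a c = 0 := by rw [h, hammingDist_self]
        omega
      have h1 : Equiv.swap a c ∈ Subgroup.closure (mcToffoliSet n) :=
        ih (d - 1) (by omega) a c (Ne.symm hca) hdac
      have h2 : Equiv.swap c b ∈ Subgroup.closure (mcToffoliSet n) :=
        ih 1 (by omega) c b hcb hdcb
      have hba : b ≠ a := Ne.symm hab
      have key : Equiv.swap c a * Equiv.swap b c * Equiv.swap c a = Equiv.swap a b :=
        Equiv.swap_mul_swap_mul_swap hcb.symm hba
      rw [← key, Equiv.swap_comm c a, Equiv.swap_comm b c]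
      exact Subgroup.mul_mem _ (Subgroup.mul_mem _ h1 h2) h1

lemma closure_mcToffoli_eq_top (n : ℕ) :
    Subgroup.closure (mcToffoliSet n) = ⊤ := by
  rw [eq_top_iff, ← Equiv.Perm.closure_isSwap, Subgroup.closure_le]
  rintro σ ⟨a, b, hab, rfl⟩
  exact swap_mem_closure n (hammingDist a b) a b hab rfl

/-- Right multiplication is a graph homomorphism of the Cayley graph. -/
def cayleyMulHom {G : Type*} [Group G] (C : Set G) (k : G) :
    cayleyGraph C →g cayleyGraph C where
  toFun g := g * k
  map_rel' := by
    rintro a b ⟨hne, c, hc, hch⟩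
    refine ⟨fun h => hne (mul_right_cancel h), c, hc, ?_⟩
    rcases hch with h | h
    · left; rw [h]; show c * a * k = c * (a * k); rw [mul_assoc]
    · right; rw [h]; show c * b * k = c * (b * k); rw [mul_assoc]

lemma reachable_mul {G : Type*} [Group G] (C : Set G) (k : G) {a b : G}
    (h : (cayleyGraph C).Reachable a b) :
    (cayleyGraph C).Reachable (a * k) (b * k) :=
  h.map (cayleyMulHom C k)

lemma reachable_one_of_mem {G : Type*} [Group G] (C : Set G) {g : G}
    (hg : g ∈ Subgroup.closure C) : (cayleyGraph C).Reachable 1 g := by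
  induction hg using Subgroup.closure_induction with
  | mem x hx =>
    by_cases h1 : x = 1
    · rw [h1]
    · exact SimpleGraph.Adj.reachable ⟨Ne.symm h1, x, hx, Or.inl (by rw [mul_one])⟩
  | one => rfl
  | mul x y hx hy ihx ihy =>
    refine ihy.trans ?_
    have := reachable_mul C y ihx
    rwa [one_mul] at this
  | inv x hx ihx =>
    have := reachable_mul C x⁻¹ ihx
    rw [one_mul, mul_inv_cancel] at this
    exact this.symm

lemma cayley_connected (n : ℕ) : (cayleyGraph (mcToffoliSet n)).Connected := by
  constructor
  intro u v
  have hu : (cayleyGraph (mcToffoliSet n)).Reachable 1 u :=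
    reachable_one_of_mem _ (by rw [closure_mcToffoli_eq_top]; trivial)
  have hv : (cayleyGraph (mcToffoliSet n)).Reachable 1 v :=
    reachable_one_of_mem _ (by rw [closure_mcToffoli_eq_top]; trivial)
  exact hu.symm.trans hv

lemma cayley_ediam_ne_top (n : ℕ) : (cayleyGraph (mcToffoliSet n)).ediam ≠ ⊤ := by
  obtain ⟨m, hm⟩ := Finite.exists_max
    (fun p : Equiv.Perm (Fin n → Bool) × Equiv.Perm (Fin n → Bool) =>
      (cayleyGraph (mcToffoliSet n)).edist p.1 p.2)
  have hle : (cayleyGraph (mcToffoliSet n)).ediam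
      ≤ (cayleyGraph (mcToffoliSet n)).edist m.1 m.2 := by
    rw [SimpleGraph.ediam_def]
    exact iSup_le hm
  have hne : (cayleyGraph (mcToffoliSet n)).edist m.1 m.2 ≠ ⊤ :=
    SimpleGraph.edist_ne_top_iff_reachable.mpr ((cayley_connected n).preconnected m.1 m.2)
  exact fun h => hne (top_le_iff.mp (h ▸ hle))


/-- The diameter of the Cayley graph `H_n` is at least `n * 2 ^ (n - 1)`. -/
theorem cayleyH_diam_lower_bound (n : ℕ) :
    n * 2 ^ (n - 1) ≤ (cayleyGraph (mcToffoliSet n)).diam := by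
  cases n with
  | zero => simp
  | succ m =>
    set G := cayleyGraph (mcToffoliSet (m + 1)) with hG
    have hreach : G.Reachable (complPerm (m + 1)) 1 :=
      ((cayley_connected (m + 1)).preconnected 1 (complPerm (m + 1))).symm
    obtain ⟨w, hw⟩ := hreach.exists_walk_length_eq_dist
    have h1 : Phi (m + 1) (complPerm (m + 1)) ≤ 2 * w.length := Phi_le_two_mul_length w
    rw [hw, Phi_complPerm] at h1
    have h2 : G.dist (complPerm (m + 1)) 1 ≤ G.diam :=
      SimpleGraph.dist_le_diam (cayley_ediam_ne_top (m + 1))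
    have h3 : 2 ^ (m + 1) * (m + 1) ≤ 2 * G.diam := h1.trans (Nat.mul_le_mul_left 2 h2)
    have h4 : 2 ^ (m + 1) = 2 * 2 ^ m := by ring
    have : 2 * ((m + 1) * 2 ^ m) ≤ 2 * G.diam := by
      calc 2 * ((m + 1) * 2 ^ m) = 2 ^ (m + 1) * (m + 1) := by ring
        _ ≤ 2 * G.diam := h3
    have := Nat.le_of_mul_le_mul_left this (by norm_num)
    simpa using this
end
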